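/- The average mixing matrix is the Gram matrix of the average pure states: for all indices a, b, the (a,b) entry of M̂ = Σ_r E_r ∘ E_r equals the trace inner product tr(Ψ(D_a)ᵀ Ψ(D_b)) of the matrices Ψ(D_a) and Ψ(D_b). -/

import Mathlib

open Matrix BigOperators

/-- The projection `Ψ(M) = ∑ r, E r * M * E r` onto the commutant. -/
def Psi {n d : ℕ} (E : Fin d → Matrix (Fin n) (Fin n) ℝ)
    (M : Matrix (Fin n) (Fin n) ℝ) : Matrix (Fin n) (Fin n) ℝ :=
  ∑ r, E r * M * E r

/-- The average mixing matrix `M̂ = ∑ r, E r ⊙ E r` is the Gram matrix of the average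
states `Ψ(D_a)`, where `D_a = e_a e_aᵀ`: its `(a,b)` entry is `tr(Ψ(D_a)ᵀ Ψ(D_b))`. -/
theorem avg_mixing_gram (n d : ℕ) (hn : 1 ≤ n)
    (A : Matrix (Fin n) (Fin n) ℝ) (hA : Aᵀ = A)
    (θ : Fin d → ℝ) (hθ : Function.Injective θ)
    (E : Fin d → Matrix (Fin n) (Fin n) ℝ)
    (hEsymm : ∀ r, (E r)ᵀ = E r)
    (hEidem : ∀ r, E r * E r = E r)
    (hEorth : ∀ r s, r ≠ s → E r * E s = 0)
    (hEsum : ∑ r, E r = 1)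
    (hdecomp : A = ∑ r, θ r • E r)
    (a b : Fin n) :
    (∑ r, E r ⊙ E r) a b =
      ((Psi E (Matrix.single a a (1 : ℝ)))ᵀ *
        Psi E (Matrix.single b b (1 : ℝ))).trace := by
  have hsym : ∀ r (i j : Fin n), E r i j = E r j i := by
    intro r i j
    conv_lhs => rw [← hEsymm r, Matrix.transpose_apply]
  have hPsi : ∀ (c x y : Fin n),
      Psi E (Matrix.single c c 1) x y = ∑ r, E r x c * E r c y := by
    intro c x y
    simp [Psi, Matrix.sum_apply, Matrix.mul_apply, Matrix.single, ite_and,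
      Finset.mul_sum, Finset.sum_ite_eq, mul_ite, ite_mul]
  have hkey : ∀ r s (i j : Fin n),
      (∑ k, E r i k * E s k j) = if r = s then E r i j else 0 := by
    intro r s i j
    by_cases h : r = s
    · subst h
      simpa [Matrix.mul_apply] using congrFun (congrFun (hEidem r) i) j
    · simpa [Matrix.mul_apply, h] using congrFun (congrFun (hEorth r s h) i) j
  symm
  calc ((Psi E (Matrix.single a a (1 : ℝ)))ᵀ *
        Psi E (Matrix.single b b (1 : ℝ))).trace
      = ∑ x, ∑ y, (∑ r, E r y a * E r a x) * (∑ s, E s y b * E s b x) := by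
        simp [Matrix.trace, Matrix.mul_apply, hPsi]
    _ = ∑ x, ∑ r, ∑ s, ∑ y, (E r y a * E r a x) * (E s y b * E s b x) := by
        refine Finset.sum_congr rfl fun x _ => ?_
        simp_rw [Finset.sum_mul_sum]
        rw [Finset.sum_comm]
        exact Finset.sum_congr rfl fun r _ => Finset.sum_comm
    _ = ∑ r, ∑ s, ∑ x, ∑ y, (E r y a * E r a x) * (E s y b * E s b x) := by
        rw [Finset.sum_comm]
        exact Finset.sum_congr rfl fun r _ => Finset.sum_comm
    _ = ∑ r, ∑ s, (∑ y, E r y a * E s y b) * (∑ x, E r a x * E s b x) := by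
        refine Finset.sum_congr rfl fun r _ => Finset.sum_congr rfl fun s _ => ?_
        rw [Finset.sum_mul_sum, Finset.sum_comm]
        exact Finset.sum_congr rfl fun x _ => Finset.sum_congr rfl fun y _ => by ring
    _ = ∑ r, ∑ s, (if r = s then E r a b else 0) * (if r = s then E r a b else 0) := by
        refine Finset.sum_congr rfl fun r _ => Finset.sum_congr rfl fun s _ => ?_
        have h1 : (∑ y, E r y a * E s y b) = if r = s then E r a b else 0 := by
          rw [← hkey r s a b]
          exact Finset.sum_congr rfl fun y _ => by rw [hsym r y a]
        have h2 : (∑ x, E r a x * E s b x) = if r = s then E r a b else 0 := by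
          rw [← hkey r s a b]
          exact Finset.sum_congr rfl fun x _ => by rw [hsym s b x]
        rw [h1, h2]
    _ = ∑ r, E r a b * E r a b := by
        refine Finset.sum_congr rfl fun r _ => ?_
        simp [Finset.sum_ite_eq, mul_ite, ite_mul]
    _ = (∑ r, E r ⊙ E r) a b := by
        simp [Matrix.sum_apply, Matrix.hadamard]
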